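/- Assume Π_A satisfies energy-band thermalization in the shell S (of cardinality d ≥ 1) with bandwidth ΔE > 0 and accuracy ε > 0, let ρ be a state supported on the shell, and let w be a weight function such that |w̃(δE)| ≤ w₀ for every δE ∈ ℝ with |δE| ≥ ΔE, where w₀ ≥ 0. Then |∫_ℝ w(t) · Tr(ρ(t) Π_A) dt − ⟨Π_A⟩_S| < (ε + w₀ · √(⟨Π_A⟩_S)) · √(d · Tr(ρ²)). -/

import Mathlib

open MeasureTheory Filter
open scoped ComplexOrder

namespace QET

variable {D : ℕ}

/-- `exp(-itH)` for the Hamiltonian `H = Σ_n (E n) • P_n`, where `P_n` is the orthogonal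
projection onto the `n`-th vector of the fixed orthonormal eigenbasis `e`.  All operators are
written as matrices in this eigenbasis, so `H` is diagonal and
`exp(-itH) = diag (exp (-i t E n))`. -/
noncomputable def U (E : Fin D → ℝ) (t : ℝ) : Matrix (Fin D) (Fin D) ℂ :=
  Matrix.diagonal fun n => Complex.exp (-(Complex.I) * t * (E n))

/-- Time evolution `X(t) = exp(-itH) · X · exp(itH)`. -/
noncomputable def evolve (E : Fin D → ℝ) (t : ℝ) (X : Matrix (Fin D) (Fin D) ℂ) :
    Matrix (Fin D) (Fin D) ℂ :=
  U E t * X * U E (-t)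

/-- A state: a positive semidefinite operator with unit trace. -/
def IsState (ρ : Matrix (Fin D) (Fin D) ℂ) : Prop :=
  ρ.PosSemidef ∧ ρ.trace = 1

/-- An observable: an orthogonal projection (Hermitian idempotent). -/
def IsObservable (P : Matrix (Fin D) (Fin D) ℂ) : Prop :=
  P.IsHermitian ∧ P * P = P

/-- Orthogonal projection `Π_S` onto the energy shell spanned by `{e n : n ∈ S}`. -/
noncomputable def shellProj (S : Finset (Fin D)) : Matrix (Fin D) (Fin D) ℂ :=
  Matrix.diagonal fun n => if n ∈ S then 1 else 0

/-- A state is supported on the shell of `S`: `Π_S ρ Π_S = ρ`. -/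
def SupportedOn (S : Finset (Fin D)) (ρ : Matrix (Fin D) (Fin D) ℂ) : Prop :=
  shellProj S * ρ * shellProj S = ρ

/-- Thermal value `⟨P⟩_S = Tr(P Π_S)/d` (a real number: trace of Hermitian products below). -/
noncomputable def thermVal (S : Finset (Fin D)) (P : Matrix (Fin D) (Fin D) ℂ) : ℝ :=
  (P * shellProj S).trace.re / S.card

/-- Fourier transform `w̃(E) = ∫ w(t) exp(-iEt) dt` of a weight function. -/
noncomputable def fourier (w : ℝ → ℝ) (En : ℝ) : ℂ :=
  ∫ t : ℝ, (w t : ℂ) * Complex.exp (-(Complex.I) * En * t)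

/-- A weight function: integrable, nonnegative, normalized to `∫ w = 1`. -/
structure IsWeight (w : ℝ → ℝ) : Prop where
  integrable : Integrable w
  nonneg : ∀ t, 0 ≤ w t
  normalized : (∫ t : ℝ, w t) = 1

/-- A completely positive weight: a weight function whose Fourier transform is a
nonnegative real number everywhere. -/
structure IsCPWeight (w : ℝ → ℝ) extends IsWeight w : Prop where
  fourier_im : ∀ En : ℝ, (fourier w En).im = 0
  fourier_nonneg : ∀ En : ℝ, 0 ≤ (fourier w En).re

/-- The matrix element `⟨e n, (P - ⟨P⟩_S · 1) e m⟩ = ⟨e n, P e m⟩ - ⟨P⟩_S δ_{nm}`. -/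
noncomputable def devEl (S : Finset (Fin D)) (P : Matrix (Fin D) (Fin D) ℂ)
    (n m : Fin D) : ℂ :=
  P n m - if n = m then (thermVal S P : ℂ) else 0

/-- Band variance `Σ_{n,m ∈ S, |E n - E m| < ΔE} |⟨e n, P e m⟩ - ⟨P⟩_S δ_{nm}|²`. -/
noncomputable def bandVar (S : Finset (Fin D)) (E : Fin D → ℝ) (ΔE : ℝ)
    (P : Matrix (Fin D) (Fin D) ℂ) : ℝ :=
  ∑ n ∈ S, ∑ m ∈ S,
    if |E n - E m| < ΔE then ‖devEl S P n m‖ ^ 2 else 0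

/-- Energy-band thermalization in the shell `S` with bandwidth `ΔE` and accuracy `ε`. -/
def EnergyBandTherm (S : Finset (Fin D)) (E : Fin D → ℝ) (ΔE ε : ℝ)
    (P : Matrix (Fin D) (Fin D) ℂ) : Prop :=
  (1 / (S.card : ℝ)) * bandVar S E ΔE P < ε ^ 2

/-- Expectation value `⟨v, P v⟩` of an operator in a vector. -/
noncomputable def expVal (P : Matrix (Fin D) (Fin D) ℂ) (v : Fin D → ℂ) : ℂ :=
  dotProduct (star v) (P.mulVec v)


section Aux

lemma abs_exp_nIct (c t : ℝ) : ‖Complex.exp (-Complex.I * c * t)‖ = 1 := by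
  rw [Complex.norm_exp]
  simp [Complex.mul_re]

lemma integrable_mod {w : ℝ → ℝ} (hw : Integrable w) (c : ℝ) :
    Integrable (fun t : ℝ => (w t : ℂ) * Complex.exp (-Complex.I * c * t)) := by
  have hb : Integrable (fun t : ℝ => Complex.exp (-Complex.I * c * t) * (w t : ℂ)) := by
    refine hw.ofReal.bdd_mul (c := 1) ?_ (Filter.Eventually.of_forall fun t => ?_)
    · exact Continuous.aestronglyMeasurable (by continuity)
    · rw [abs_exp_nIct]
  simpa [mul_comm] using hb

lemma fourier_abs_le {w : ℝ → ℝ} (hw : IsWeight w) (c : ℝ) :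
    ‖fourier w c‖ ≤ 1 := by
  rw [fourier]
  calc ‖∫ t : ℝ, (w t : ℂ) * Complex.exp (-Complex.I * c * t)‖
      ≤ ∫ t : ℝ, ‖(w t : ℂ) * Complex.exp (-Complex.I * c * t)‖ :=
        norm_integral_le_integral_norm _
    _ = ∫ t : ℝ, w t := by
        congr 1
        funext t
        rw [norm_mul, abs_exp_nIct]
        simp [abs_of_nonneg (hw.nonneg t)]
    _ = 1 := hw.normalized

lemma fourier_zero {w : ℝ → ℝ} (hw : IsWeight w) : fourier w 0 = 1 := by
  rw [fourier]
  simp only [Complex.ofReal_zero, mul_zero, zero_mul, Complex.exp_zero, mul_one]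
  have : (∫ t : ℝ, ((w t : ℂ))) = ((∫ t : ℝ, w t : ℝ) : ℂ) := integral_ofReal
  rw [this, hw.normalized, Complex.ofReal_one]

lemma supported_apply {S : Finset (Fin D)} {ρ : Matrix (Fin D) (Fin D) ℂ}
    (h : SupportedOn S ρ) {n m : Fin D} (hnm : n ∉ S ∨ m ∉ S) : ρ n m = 0 := by
  have h' := congrFun (congrFun h n) m
  rw [shellProj, Matrix.mul_diagonal, Matrix.diagonal_mul] at h'
  rcases hnm with hn | hm
  · rw [if_neg hn] at h'; simpa using h'.symm
  · rw [if_neg hm] at h'; simpa using h'.symm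

lemma devEl_abs_symm {S : Finset (Fin D)} {P : Matrix (Fin D) (Fin D) ℂ}
    (hP : P.IsHermitian) (n m : Fin D) :
    ‖devEl S P m n‖ = ‖devEl S P n m‖ := by
  have h1 : star (P n m) = P m n := hP.apply m n
  have h : devEl S P m n = star (devEl S P n m) := by
    rw [devEl, devEl, star_sub, h1]
    congr 1
    by_cases hc : n = m
    · subst hc; simp
    · rw [if_neg hc, if_neg (fun hh : m = n => hc hh.symm), star_zero]
  rw [h]
  exact Complex.norm_conj _

lemma cs_sum {ι : Type*} (t : Finset ι) (f g : ι → ℝ)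
    (hf : ∀ i ∈ t, 0 ≤ f i) (hg : ∀ i ∈ t, 0 ≤ g i) :
    ∑ i ∈ t, f i * g i
      ≤ Real.sqrt (∑ i ∈ t, f i ^ 2) * Real.sqrt (∑ i ∈ t, g i ^ 2) := by
  have h := Finset.sum_mul_sq_le_sq_mul_sq t f g
  have hnn : 0 ≤ ∑ i ∈ t, f i * g i :=
    Finset.sum_nonneg fun i hi => mul_nonneg (hf i hi) (hg i hi)
  calc ∑ i ∈ t, f i * g i = Real.sqrt ((∑ i ∈ t, f i * g i)^2) :=
        (Real.sqrt_sq hnn).symm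
    _ ≤ Real.sqrt ((∑ i ∈ t, f i ^ 2) * (∑ i ∈ t, g i ^ 2)) := Real.sqrt_le_sqrt h
    _ = _ := Real.sqrt_mul (Finset.sum_nonneg fun i _ => sq_nonneg _) _

end Aux

set_option maxHeartbeats 1000000 in
/-- **Energy-band thermalization implies thermalization o.a. over accessible timescales.**
If `Π_A` satisfies energy-band thermalization in the shell `S` (of cardinality `d ≥ 1`)
with bandwidth `ΔE > 0` and accuracy `ε > 0`, `ρ` is a state supported on the shell, and
`w` is a weight function with `|w̃(δE)| ≤ w₀` whenever `|δE| ≥ ΔE`, then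
`|∫ w(t) Tr(ρ(t) Π_A) dt - ⟨Π_A⟩_S| < (ε + w₀ √⟨Π_A⟩_S) · √(d · Tr ρ²)`. -/
theorem energy_band_thermalization_implies_thermalization_oa
    {D : ℕ} (hD : 0 < D) (E : Fin D → ℝ)
    (S : Finset (Fin D)) (hd : 1 ≤ S.card)
    (PiA : Matrix (Fin D) (Fin D) ℂ) (hPiA : IsObservable PiA)
    (ΔE ε : ℝ) (hΔE : 0 < ΔE) (hε : 0 < ε)
    (hEBT : EnergyBandTherm S E ΔE ε PiA)
    (ρ : Matrix (Fin D) (Fin D) ℂ) (hρ : IsState ρ) (hsupp : SupportedOn S ρ)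
    (w : ℝ → ℝ) (hw : IsWeight w) (w₀ : ℝ) (hw₀ : 0 ≤ w₀)
    (hband : ∀ δE : ℝ, ΔE ≤ |δE| → ‖fourier w δE‖ ≤ w₀) :
    ‖(∫ t : ℝ, (w t : ℂ) * (evolve E t ρ * PiA).trace) - (thermVal S PiA : ℂ)‖
      < (ε + w₀ * Real.sqrt (thermVal S PiA)) *
        Real.sqrt (S.card * (ρ * ρ).trace.re) := by
  obtain ⟨hρpos, hρtr⟩ := hρ
  obtain ⟨hA, hA2⟩ := hPiA
  have hρherm : ρ.IsHermitian := hρpos.1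
  have hd' : (0:ℝ) < S.card := by exact_mod_cast hd
  set τ := thermVal S PiA with hτdef
  -- Step 1: evaluate the integral
  have hint : (∫ t : ℝ, (w t : ℂ) * (evolve E t ρ * PiA).trace)
      = ∑ p ∈ Finset.univ ×ˢ (Finset.univ : Finset (Fin D)),
          fourier w (E p.1 - E p.2) * (ρ p.1 p.2 * PiA p.2 p.1) := by
    have h1 : (fun t : ℝ => (w t : ℂ) * (evolve E t ρ * PiA).trace)
        = fun t => ∑ p ∈ Finset.univ ×ˢ (Finset.univ : Finset (Fin D)),
            ((w t : ℂ) * Complex.exp (-Complex.I * ((E p.1 - E p.2 : ℝ) : ℂ) * t))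
              * (ρ p.1 p.2 * PiA p.2 p.1) := by
      funext t
      rw [Finset.sum_product]
      simp only [Matrix.trace, Matrix.diag, Matrix.mul_apply, Finset.mul_sum]
      refine Finset.sum_congr rfl fun n _ => Finset.sum_congr rfl fun m _ => ?_
      have he : (evolve E t ρ) n m
          = Complex.exp (-Complex.I * ((E n - E m : ℝ) : ℂ) * t) * ρ n m := by
        simp only [evolve, U]
        rw [Matrix.mul_diagonal, Matrix.diagonal_mul,
          mul_right_comm, ← Complex.exp_add]
        congr 2
        push_cast
        ring
      rw [he]
      ring
    have h3 := integral_finset_sum (μ := volume)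
      (Finset.univ ×ˢ (Finset.univ : Finset (Fin D)))
      (f := fun p t => ((w t : ℂ)
          * Complex.exp (-Complex.I * ((E p.1 - E p.2 : ℝ) : ℂ) * t))
        * (ρ p.1 p.2 * PiA p.2 p.1))
      (fun p _ => Integrable.mul_const (integrable_mod hw.integrable _) _)
    rw [h1, h3]
    refine Finset.sum_congr rfl fun p _ => ?_
    have h2 := integral_smul_const (μ := volume)
      (fun t : ℝ => (w t : ℂ) * Complex.exp (-Complex.I * ((E p.1 - E p.2 : ℝ) : ℂ) * t))
      (ρ p.1 p.2 * PiA p.2 p.1)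
    simpa [smul_eq_mul, fourier] using h2
  -- trace of ρ restricted
  have htrS : ∑ n ∈ S, ρ n n = 1 := by
    rw [← hρtr]
    simp only [Matrix.trace, Matrix.diag]
    exact Finset.sum_subset (Finset.subset_univ S)
      (fun n _ hn => supported_apply hsupp (Or.inl hn))
  -- Step 2: subtract thermal value
  have hkey : (∫ t : ℝ, (w t : ℂ) * (evolve E t ρ * PiA).trace) - (τ : ℂ)
      = ∑ p ∈ S ×ˢ S, fourier w (E p.1 - E p.2) * (ρ p.1 p.2 * devEl S PiA p.2 p.1) := by
    rw [hint]
    have hres : ∑ p ∈ Finset.univ ×ˢ (Finset.univ : Finset (Fin D)),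
          fourier w (E p.1 - E p.2) * (ρ p.1 p.2 * PiA p.2 p.1)
        = ∑ p ∈ S ×ˢ S, fourier w (E p.1 - E p.2) * (ρ p.1 p.2 * PiA p.2 p.1) := by
      refine (Finset.sum_subset (fun p _ => by simp) ?_).symm
      intro p _ hp
      rw [Finset.mem_product, not_and_or] at hp
      rw [supported_apply hsupp hp]
      ring
    have hdiag : (∑ p ∈ S ×ˢ S, fourier w (E p.1 - E p.2)
          * (ρ p.1 p.2 * (if p.2 = p.1 then (τ:ℂ) else 0))) = (τ:ℂ) := by
      rw [Finset.sum_product]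
      have hrow : ∀ n ∈ S, (∑ m ∈ S, fourier w (E n - E m)
          * (ρ n m * (if m = n then (τ:ℂ) else 0))) = ρ n n * τ := by
        intro n hn
        calc (∑ m ∈ S, fourier w (E n - E m) * (ρ n m * (if m = n then (τ:ℂ) else 0)))
            = ∑ m ∈ S, (if m = n then fourier w (E n - E m) * (ρ n m * τ) else 0) := by
              refine Finset.sum_congr rfl fun m _ => ?_
              by_cases h : m = n <;> simp [h]
          _ = fourier w (E n - E n) * (ρ n n * τ) := by
              rw [Finset.sum_ite_eq' S n (fun m => fourier w (E n - E m) * (ρ n m * (τ:ℂ))),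
                if_pos hn]
          _ = ρ n n * τ := by rw [sub_self, fourier_zero hw, one_mul]
      rw [Finset.sum_congr rfl hrow, ← Finset.sum_mul, htrS, one_mul]
    have hsplitsum : (∑ p ∈ S ×ˢ S, fourier w (E p.1 - E p.2) * (ρ p.1 p.2 * PiA p.2 p.1))
        = (∑ p ∈ S ×ˢ S, fourier w (E p.1 - E p.2) * (ρ p.1 p.2 * devEl S PiA p.2 p.1))
          + ∑ p ∈ S ×ˢ S, fourier w (E p.1 - E p.2)
              * (ρ p.1 p.2 * (if p.2 = p.1 then (τ:ℂ) else 0)) := by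
      rw [← Finset.sum_add_distrib]
      refine Finset.sum_congr rfl fun p _ => ?_
      have : PiA p.2 p.1 = devEl S PiA p.2 p.1 + (if p.2 = p.1 then (τ:ℂ) else 0) := by
        rw [devEl]; ring
      rw [this]; ring
    rw [hres, hsplitsum, hdiag]
    ring
  -- quantities
  have hT : ∑ p ∈ S ×ˢ S, ‖ρ p.1 p.2‖ ^ 2 = (ρ * ρ).trace.re := by
    have h1 : (ρ * ρ).trace.re = ∑ n : Fin D, ∑ m : Fin D, ‖ρ n m‖ ^ 2 := by
      simp only [Matrix.trace, Matrix.diag, Matrix.mul_apply]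
      rw [Complex.re_sum]
      refine Finset.sum_congr rfl fun n _ => ?_
      rw [Complex.re_sum]
      refine Finset.sum_congr rfl fun m _ => ?_
      rw [← hρherm.apply m n,
        show ρ n m * star (ρ n m) = (Complex.normSq (ρ n m) : ℂ) from Complex.mul_conj _]
      simp [Complex.sq_norm]
    have hin : ∀ n : Fin D, ∑ m ∈ S, ‖ρ n m‖ ^ 2
        = ∑ m : Fin D, ‖ρ n m‖ ^ 2 := fun n =>
      Finset.sum_subset (Finset.subset_univ S)
        (fun m _ hm => by rw [supported_apply hsupp (Or.inr hm)]; simp)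
    rw [h1, Finset.sum_product, Finset.sum_congr rfl fun n _ => hin n]
    exact Finset.sum_subset (Finset.subset_univ S)
      (fun n _ hn => Finset.sum_eq_zero fun m _ => by
        rw [supported_apply hsupp (Or.inl hn)]; simp)
  have hBand : bandVar S E ΔE PiA
      = ∑ p ∈ (S ×ˢ S).filter (fun p => |E p.1 - E p.2| < ΔE),
          ‖devEl S PiA p.1 p.2‖ ^ 2 := by
    rw [Finset.sum_filter, Finset.sum_product, bandVar]
  have hdiagA : ∀ n : Fin D, (PiA n n).re = ∑ m : Fin D, ‖PiA n m‖ ^ 2 := by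
    intro n
    have h1 : PiA n n = ∑ m : Fin D, (Complex.normSq (PiA n m) : ℂ) := by
      conv_lhs => rw [← hA2]
      rw [Matrix.mul_apply]
      refine Finset.sum_congr rfl fun m _ => ?_
      rw [← hA.apply m n]
      exact Complex.mul_conj _
    rw [h1, Complex.re_sum]
    simp [Complex.sq_norm]
  have hDg : ∑ n ∈ S, (PiA n n).re = S.card * τ := by
    have h1 : (PiA * shellProj S).trace = ∑ n ∈ S, PiA n n := by
      simp only [Matrix.trace, Matrix.diag, shellProj, Matrix.mul_diagonal]
      rw [Finset.sum_congr rfl (fun n (_ : n ∈ Finset.univ) => by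
        rw [mul_ite, mul_one, mul_zero]), Finset.sum_ite_mem, Finset.univ_inter]
    rw [hτdef, thermVal, h1, Complex.re_sum]
    field_simp
  have hτ0 : 0 ≤ τ := by
    have h2 : 0 ≤ ∑ n ∈ S, (PiA n n).re :=
      Finset.sum_nonneg fun n _ => by rw [hdiagA n]; positivity
    nlinarith [hDg, h2, hd']
  have hQ : ∑ p ∈ S ×ˢ S, ‖PiA p.1 p.2‖ ^ 2 ≤ S.card * τ := by
    rw [Finset.sum_product, ← hDg]
    refine Finset.sum_le_sum fun n _ => ?_
    rw [hdiagA n]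
    exact Finset.sum_le_sum_of_subset_of_nonneg (Finset.subset_univ S)
      (fun m _ _ => by positivity)
  have hV : ∑ p ∈ S ×ˢ S, ‖devEl S PiA p.1 p.2‖ ^ 2 ≤ S.card * τ := by
    have hexp : ∑ p ∈ S ×ˢ S, ‖devEl S PiA p.1 p.2‖ ^ 2
        = (∑ p ∈ S ×ˢ S, ‖PiA p.1 p.2‖ ^ 2) - S.card * τ ^ 2 := by
      rw [Finset.sum_product, Finset.sum_product]
      have hrow : ∀ n ∈ S, ∑ m ∈ S, ‖devEl S PiA n m‖ ^ 2
          = (∑ m ∈ S, ‖PiA n m‖ ^ 2)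
            - (2 * τ * (PiA n n).re - τ ^ 2) := by
        intro n hn
        have hterm : ∀ m, ‖devEl S PiA n m‖ ^ 2
            = ‖PiA n m‖ ^ 2
              - (if n = m then 2 * τ * (PiA n m).re - τ ^ 2 else 0) := by
          intro m
          by_cases h : n = m
          · rw [devEl, if_pos h, if_pos h, Complex.sq_norm, Complex.sq_norm]
            simp only [Complex.normSq_apply, Complex.sub_re, Complex.sub_im,
              Complex.ofReal_re, Complex.ofReal_im]
            ring
          · rw [devEl, if_neg h, sub_zero, if_neg h, sub_zero]
        rw [Finset.sum_congr rfl fun m _ => hterm m, Finset.sum_sub_distrib,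
          Finset.sum_ite_eq S n (fun m => 2 * τ * (PiA n m).re - τ ^ 2), if_pos hn]
      rw [Finset.sum_congr rfl hrow, Finset.sum_sub_distrib, Finset.sum_sub_distrib,
        ← Finset.mul_sum, hDg, Finset.sum_const, nsmul_eq_mul]
      ring
    rw [hexp]
    nlinarith [hQ, sq_nonneg τ, hd', hτ0]
  have hTpos : 0 < ∑ p ∈ S ×ˢ S, ‖ρ p.1 p.2‖ ^ 2 := by
    obtain ⟨n, hn, hne⟩ := Finset.exists_ne_zero_of_sum_ne_zero
      (show ∑ n ∈ S, ρ n n ≠ 0 by rw [htrS]; exact one_ne_zero)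
    have hp : (n, n) ∈ S ×ˢ S := Finset.mem_product.mpr ⟨hn, hn⟩
    have h0 : 0 < ‖ρ n n‖ ^ 2 :=
      pow_pos (norm_pos_iff.mpr hne) 2
    have hle := Finset.single_le_sum
      (f := fun p : Fin D × Fin D => ‖ρ p.1 p.2‖ ^ 2)
      (fun p _ => sq_nonneg _) hp
    exact lt_of_lt_of_le h0 hle
  -- abbreviations
  set T := ∑ p ∈ S ×ˢ S, ‖ρ p.1 p.2‖ ^ 2 with hTdef
  set Bp := (S ×ˢ S).filter (fun p => |E p.1 - E p.2| < ΔE) with hBpdef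
  set Cp := (S ×ˢ S).filter (fun p => ¬ |E p.1 - E p.2| < ΔE) with hCpdef
  have hrnn : ∀ p : Fin D × Fin D, 0 ≤ ‖ρ p.1 p.2‖ :=
    fun p => norm_nonneg _
  have hvnn : ∀ p : Fin D × Fin D, 0 ≤ ‖devEl S PiA p.1 p.2‖ :=
    fun p => norm_nonneg _
  -- bound the absolute value
  have h1 : ‖∑ p ∈ S ×ˢ S,
        fourier w (E p.1 - E p.2) * (ρ p.1 p.2 * devEl S PiA p.2 p.1)‖
      ≤ ∑ p ∈ S ×ˢ S, ‖fourier w (E p.1 - E p.2)‖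
          * (‖ρ p.1 p.2‖ * ‖devEl S PiA p.1 p.2‖) := by
    refine le_trans (norm_sum_le _ _) (Finset.sum_le_sum fun p _ => ?_)
    exact le_of_eq (by rw [norm_mul, norm_mul, devEl_abs_symm hA p.1 p.2])
  have hsplit : ∑ p ∈ S ×ˢ S, ‖fourier w (E p.1 - E p.2)‖
          * (‖ρ p.1 p.2‖ * ‖devEl S PiA p.1 p.2‖)
      = (∑ p ∈ Bp, ‖fourier w (E p.1 - E p.2)‖
          * (‖ρ p.1 p.2‖ * ‖devEl S PiA p.1 p.2‖))
        + ∑ p ∈ Cp, ‖fourier w (E p.1 - E p.2)‖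
          * (‖ρ p.1 p.2‖ * ‖devEl S PiA p.1 p.2‖) :=
    (Finset.sum_filter_add_sum_filter_not _ _ _).symm
  have hB1 : ∑ p ∈ Bp, ‖fourier w (E p.1 - E p.2)‖
        * (‖ρ p.1 p.2‖ * ‖devEl S PiA p.1 p.2‖)
      ≤ ∑ p ∈ Bp, ‖ρ p.1 p.2‖ * ‖devEl S PiA p.1 p.2‖ :=
    Finset.sum_le_sum fun p _ => mul_le_of_le_one_left
      (mul_nonneg (hrnn p) (hvnn p)) (fourier_abs_le hw _)
  have hC1 : ∑ p ∈ Cp, ‖fourier w (E p.1 - E p.2)‖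
        * (‖ρ p.1 p.2‖ * ‖devEl S PiA p.1 p.2‖)
      ≤ w₀ * ∑ p ∈ Cp, ‖ρ p.1 p.2‖ * ‖devEl S PiA p.1 p.2‖ := by
    rw [Finset.mul_sum]
    refine Finset.sum_le_sum fun p hp => ?_
    have hout : ΔE ≤ |E p.1 - E p.2| := not_lt.mp (Finset.mem_filter.mp hp).2
    exact mul_le_mul_of_nonneg_right (hband _ hout)
      (mul_nonneg (hrnn p) (hvnn p))
  -- Cauchy-Schwarz on each block
  have hsubB : ∑ p ∈ Bp, ‖ρ p.1 p.2‖ ^ 2 ≤ T :=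
    Finset.sum_le_sum_of_subset_of_nonneg (Finset.filter_subset _ _)
      (fun p _ _ => sq_nonneg _)
  have hsubC : ∑ p ∈ Cp, ‖ρ p.1 p.2‖ ^ 2 ≤ T :=
    Finset.sum_le_sum_of_subset_of_nonneg (Finset.filter_subset _ _)
      (fun p _ _ => sq_nonneg _)
  have hsubCv : ∑ p ∈ Cp, ‖devEl S PiA p.1 p.2‖ ^ 2 ≤ S.card * τ :=
    le_trans (Finset.sum_le_sum_of_subset_of_nonneg (Finset.filter_subset _ _)
      (fun p _ _ => sq_nonneg _)) hV
  have hBb : ∑ p ∈ Bp, ‖ρ p.1 p.2‖ * ‖devEl S PiA p.1 p.2‖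
      ≤ Real.sqrt T * Real.sqrt (bandVar S E ΔE PiA) := by
    refine le_trans (cs_sum Bp _ _ (fun p _ => hrnn p) (fun p _ => hvnn p)) ?_
    rw [hBand]
    exact mul_le_mul_of_nonneg_right (Real.sqrt_le_sqrt hsubB) (Real.sqrt_nonneg _)
  have hCb : ∑ p ∈ Cp, ‖ρ p.1 p.2‖ * ‖devEl S PiA p.1 p.2‖
      ≤ Real.sqrt T * (Real.sqrt (S.card) * Real.sqrt τ) := by
    refine le_trans (cs_sum Cp _ _ (fun p _ => hrnn p) (fun p _ => hvnn p)) ?_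
    rw [← Real.sqrt_mul (Nat.cast_nonneg _) τ]
    exact mul_le_mul (Real.sqrt_le_sqrt hsubC) (Real.sqrt_le_sqrt hsubCv)
      (Real.sqrt_nonneg _) (Real.sqrt_nonneg _)
  -- strict bound on band variance
  have hEBT' : (1 / (S.card : ℝ)) * bandVar S E ΔE PiA < ε ^ 2 := hEBT
  have hbv0 : 0 ≤ bandVar S E ΔE PiA := by
    rw [hBand]; exact Finset.sum_nonneg fun p _ => sq_nonneg _
  have hbvlt : bandVar S E ΔE PiA < S.card * ε ^ 2 := by
    rw [one_div] at hEBT'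
    exact (inv_mul_lt_iff₀ hd').mp hEBT'
  have hsq : Real.sqrt (bandVar S E ΔE PiA) < ε * Real.sqrt (S.card) := by
    have := Real.sqrt_lt_sqrt hbv0 hbvlt
    rwa [Real.sqrt_mul (Nat.cast_nonneg _), Real.sqrt_sq hε.le, mul_comm] at this
  have hTs : 0 < Real.sqrt T := Real.sqrt_pos.mpr hTpos
  -- assemble
  rw [hkey, ← hT]
  calc ‖∑ p ∈ S ×ˢ S,
        fourier w (E p.1 - E p.2) * (ρ p.1 p.2 * devEl S PiA p.2 p.1)‖
      ≤ ∑ p ∈ S ×ˢ S, ‖fourier w (E p.1 - E p.2)‖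
          * (‖ρ p.1 p.2‖ * ‖devEl S PiA p.1 p.2‖) := h1
    _ = _ + _ := hsplit
    _ ≤ (∑ p ∈ Bp, ‖ρ p.1 p.2‖ * ‖devEl S PiA p.1 p.2‖)
        + w₀ * ∑ p ∈ Cp, ‖ρ p.1 p.2‖ * ‖devEl S PiA p.1 p.2‖ :=
        add_le_add hB1 hC1
    _ ≤ Real.sqrt T * Real.sqrt (bandVar S E ΔE PiA)
        + w₀ * (Real.sqrt T * (Real.sqrt (S.card) * Real.sqrt τ)) :=
        add_le_add hBb (mul_le_mul_of_nonneg_left hCb hw₀)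
    _ < Real.sqrt T * (ε * Real.sqrt (S.card))
        + w₀ * (Real.sqrt T * (Real.sqrt (S.card) * Real.sqrt τ)) := by
        exact add_lt_add_left (mul_lt_mul_of_pos_left hsq hTs) _
    _ = (ε + w₀ * Real.sqrt τ) * Real.sqrt ((S.card : ℝ) * T) := by
        rw [Real.sqrt_mul (Nat.cast_nonneg _)]
        ring


end QET
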